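/- Let g ∈ GU(V) with multiplier μ = λ² for a scalar λ ∈ F^×, and suppose λ + g is invertible. Set X_λ = (1 − g)(λ + g)^{-1}. Then X_λ + X_λ* = λ^{-1} − 1; moreover 1 + X_λ is invertible if and only if λ ≠ −1, and in that case c(X_λ) = g, where c is the similitude Cayley map. -/

import Mathlib

/- STATEMENT 6: Let g ∈ GU(V) with multiplier μ = l² for a scalar l ∈ F^× (so
l ≠ 0 and τ l = l), and suppose l + g is invertible. Set X_l = (1 − g)(l + g)⁻¹.
Then X_l + X_l* = l⁻¹ − 1; moreover 1 + X_l is invertible iff l ≠ −1, and in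
that case c(X_l) = g, where c is the similitude Cayley map
c(X) = (1 − (1+α(X))⁻¹X)(1+X)⁻¹ with α(X_l) = l⁻¹ − 1. -/
theorem cayley_fibers
    {E V : Type*} [Field E] [AddCommGroup V] [Module E V]
    [FiniteDimensional E V] [Nontrivial V]
    (hchar : (2 : E) ≠ 0)
    (τ : E →+* E) (hτ : ∀ a : E, τ (τ a) = a)
    (ε : E) (hε : ε = 1 ∨ ε = -1)
    (B : V → V → E)
    (haddl : ∀ u v w : V, B (u + v) w = B u w + B v w)
    (hsmull : ∀ (c : E) (v w : V), B (c • v) w = c * B v w)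
    (hherm : ∀ v w : V, B v w = ε * τ (B w v))
    (hnd : ∀ v : V, (∀ w : V, B v w = 0) → v = 0)
    (adj : (V →ₗ[E] V) → (V →ₗ[E] V))
    (hadj : ∀ (a : V →ₗ[E] V) (v w : V), B (a v) w = B v (adj a w))
    (g : V →ₗ[E] V) (hgu : IsUnit g)
    (l : E) (hl0 : l ≠ 0) (hlτ : τ l = l)
    (hμ : g * adj g = (l ^ 2) • (1 : V →ₗ[E] V))
    (hinv : IsUnit (l • (1 : V →ₗ[E] V) + g)) :
    (((1 - g) * Ring.inverse (l • (1 : V →ₗ[E] V) + g)) +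
        adj ((1 - g) * Ring.inverse (l • (1 : V →ₗ[E] V) + g)) =
        (l⁻¹ - 1) • (1 : V →ₗ[E] V)) ∧
    (IsUnit (1 + (1 - g) * Ring.inverse (l • (1 : V →ₗ[E] V) + g)) ↔ l ≠ -1) ∧
    (l ≠ -1 →
      (1 - ((1 + (l⁻¹ - 1))⁻¹ : E) • ((1 - g) * Ring.inverse (l • (1 : V →ₗ[E] V) + g))) *
        Ring.inverse (1 + (1 - g) * Ring.inverse (l • (1 : V →ₗ[E] V) + g)) = g) := by
  -- sesquilinearity in the second argument
  have hBadd2 : ∀ u v w : V, B u (v + w) = B u v + B u w := by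
    intro u v w
    rw [hherm u (v + w), haddl, map_add, mul_add, ← hherm, ← hherm]
  have hBsmul2 : ∀ (d : E) (u v : V), B u (d • v) = τ d * B u v := by
    intro d u v
    rw [hherm u (d • v), hsmull, map_mul, hherm u v]; ring
  -- non-degeneracy in the second argument
  have hnd2 : ∀ w : V, (∀ v : V, B v w = 0) → w = 0 := by
    intro w h
    refine hnd w fun v => ?_
    rw [hherm w v, h v, map_zero, mul_zero]
  -- uniqueness of adjoints
  have ext2 : ∀ a b : V →ₗ[E] V, (∀ v w : V, B v (a w) = B v (b w)) → a = b := by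
    intro a b h
    ext w
    have h0 : ∀ v : V, B v (a w - b w) = 0 := by
      intro v
      have h1 : B v (b w + (a w - b w)) = B v (b w) + B v (a w - b w) := hBadd2 v _ _
      rw [add_sub_cancel] at h1
      have h2 := h v w
      linear_combination h2 - h1
    have := hnd2 _ h0
    rw [sub_eq_zero] at this
    exact this
  have hadj' : ∀ a b : V →ₗ[E] V, (∀ v w : V, B (a v) w = B v (b w)) → adj a = b := by
    intro a b h
    exact ext2 _ _ fun v w => by rw [← hadj, h]
  -- basic adjoint identities
  have adj_one : adj 1 = 1 := hadj' 1 1 fun v w => rfl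
  have adj_mul : ∀ a b : V →ₗ[E] V, adj (a * b) = adj b * adj a := by
    intro a b
    refine hadj' _ _ fun v w => ?_
    rw [Module.End.mul_apply, hadj, hadj, Module.End.mul_apply]
  have adj_add : ∀ a b : V →ₗ[E] V, adj (a + b) = adj a + adj b := by
    intro a b
    refine hadj' _ _ fun v w => ?_
    rw [LinearMap.add_apply, haddl, hadj, hadj, LinearMap.add_apply, hBadd2]
  have adj_smul : ∀ (c : E) (a : V →ₗ[E] V), adj (c • a) = τ c • adj a := by
    intro c a
    refine hadj' _ _ fun v w => ?_
    rw [LinearMap.smul_apply, hsmull, hadj, LinearMap.smul_apply, hBsmul2, hτ]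
  have adj_sub : ∀ a b : V →ₗ[E] V, adj (a - b) = adj a - adj b := by
    intro a b
    have h1 : adj (-b) = -(adj b) := by
      have := adj_smul (-1 : E) b
      simpa using this
    rw [sub_eq_add_neg, adj_add, h1, sub_eq_add_neg]
  -- abbreviations
  set s : V →ₗ[E] V := l • (1 : V →ₗ[E] V) + g with hs
  set s' : V →ₗ[E] V := Ring.inverse s with hs'def
  set γ : V →ₗ[E] V := Ring.inverse g with hγdef
  have hss' : s * s' = 1 := Ring.mul_inverse_cancel s hinv
  have hs's : s' * s = 1 := Ring.inverse_mul_cancel s hinv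
  have hgγ : g * γ = 1 := Ring.mul_inverse_cancel g hgu
  have hγg : γ * g = 1 := Ring.inverse_mul_cancel g hgu
  clear_value s' γ
  -- uniqueness of Ring.inverse
  have inv_eq : ∀ a b : V →ₗ[E] V, a * b = 1 → b * a = 1 → Ring.inverse a = b := by
    intro a b h1 h2
    have ha : IsUnit a := ⟨⟨a, b, h1, h2⟩, rfl⟩
    calc Ring.inverse a = Ring.inverse a * (a * b) := by rw [h1, mul_one]
      _ = (Ring.inverse a * a) * b := by rw [mul_assoc]
      _ = b := by rw [Ring.inverse_mul_cancel a ha, one_mul]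
  -- commutation facts
  have hgs : g * s = s * g := by
    rw [hs, mul_add, add_mul, mul_smul_comm, smul_mul_assoc, one_mul, mul_one]
  clear_value s
  have comm_inv : ∀ x : V →ₗ[E] V, x * s = s * x → x * s' = s' * x := by
    intro x hx
    calc x * s' = 1 * x * s' := by rw [one_mul]
      _ = (s' * s) * x * s' := by rw [hs's]
      _ = s' * (s * x) * s' := by rw [mul_assoc s' s x]
      _ = s' * (x * s) * s' := by rw [hx]
      _ = (s' * x) * (s * s') := by rw [← mul_assoc s' x s, mul_assoc (s' * x) s s']
      _ = s' * x := by rw [hss', mul_one]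
  have hgs' : g * s' = s' * g := comm_inv g hgs
  have hγs : γ * s = s * γ := by
    calc γ * s = γ * s * (g * γ) := by rw [hgγ, mul_one]
      _ = γ * (s * g) * γ := by rw [mul_assoc, mul_assoc, mul_assoc]
      _ = γ * (g * s) * γ := by rw [hgs]
      _ = (γ * g) * (s * γ) := by rw [← mul_assoc γ g s, mul_assoc (γ * g) s γ]
      _ = s * γ := by rw [hγg, one_mul]
  have hγs' : γ * s' = s' * γ := comm_inv γ hγs
  -- a key expansion: l • s' + s' * g = 1
  have hexp : l • s' + s' * g = 1 := by
    have h1 : s' * (l • (1 : V →ₗ[E] V) + g) = l • s' + s' * g := by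
      rw [mul_add, mul_smul_comm, mul_one]
    rw [← h1, ← hs, hs's]
  -- adjoint of g
  have hadjg : adj g = (l ^ 2) • γ := by
    calc adj g = (γ * g) * adj g := by rw [hγg, one_mul]
      _ = γ * (g * adj g) := by rw [mul_assoc]
      _ = γ * ((l ^ 2) • (1 : V →ₗ[E] V)) := by rw [hμ]
      _ = (l ^ 2) • γ := by rw [mul_smul_comm, mul_one]
  -- adjoint of s
  have hadjs : adj s = l • (1 : V →ₗ[E] V) + (l ^ 2) • γ := by
    rw [hs, adj_add, adj_smul, adj_one, hadjg, hlτ]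
  -- scalar facts
  have e1 : l * l⁻¹ = 1 := mul_inv_cancel₀ hl0
  have e1' : l⁻¹ * l = 1 := inv_mul_cancel₀ hl0
  have e2 : l ^ 2 * l⁻¹ = l := by field_simp
  have e2' : l⁻¹ * l ^ 2 = l := by field_simp
  have e3 : s' * g * γ = s' := by rw [mul_assoc, hgγ, mul_one]
  have e3' : γ * (s' * g) = s' := by rw [← mul_assoc, hγs', mul_assoc, hγg, mul_one]
  -- inverse of adj s
  have hA1 : adj s * (l⁻¹ • (s' * g)) = 1 := by
    rw [hadjs, add_mul, smul_mul_assoc, smul_mul_assoc, one_mul, mul_smul_comm,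
      smul_smul, smul_smul, e1, e2, e3', one_smul, add_comm]
    exact hexp
  have hA2 : (l⁻¹ • (s' * g)) * adj s = 1 := by
    rw [hadjs, mul_add, mul_smul_comm, mul_smul_comm, mul_one, smul_mul_assoc,
      smul_smul, smul_smul, e1, e2, e3, one_smul, add_comm]
    exact hexp
  -- adj s' equals that inverse
  have hadjs' : adj s' = l⁻¹ • (s' * g) := by
    have h1 : adj s * adj s' = 1 := by rw [← adj_mul, hs's, adj_one]
    have h2 : adj s' * adj s = 1 := by rw [← adj_mul, hss', adj_one]
    calc adj s' = adj s' * (adj s * (l⁻¹ • (s' * g))) := by rw [hA1, mul_one]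
      _ = (adj s' * adj s) * (l⁻¹ • (s' * g)) := by rw [mul_assoc]
      _ = l⁻¹ • (s' * g) := by rw [h2, one_mul]
  -- X and its adjoint
  set X : V →ₗ[E] V := (1 - g) * s' with hX
  have hXalt : X = s' - s' * g := by
    rw [hX, sub_mul, one_mul, hgs']
  clear_value X
  have hadjX : adj X = l⁻¹ • (s' * g) - l • s' := by
    rw [hX, adj_mul, hadjs', adj_sub, adj_one, hadjg]
    rw [smul_mul_assoc, mul_sub, mul_one, mul_smul_comm, e3, smul_sub, smul_smul, e2']
  -- Part 1
  have part1 : X + adj X = (l⁻¹ - 1) • (1 : V →ₗ[E] V) := by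
    rw [hadjX, hXalt]
    have key : (l⁻¹ - 1) • (1 : V →ₗ[E] V) = (1 - l) • s' + (l⁻¹ - 1) • (s' * g) := by
      calc (l⁻¹ - 1) • (1 : V →ₗ[E] V) = (l⁻¹ - 1) • (s' * s) := by rw [hs's]
        _ = (l⁻¹ - 1) • (s' * (l • (1 : V →ₗ[E] V) + g)) := by rw [← hs]
        _ = (l⁻¹ - 1) • (l • s' + s' * g) := by rw [mul_add, mul_smul_comm, mul_one]
        _ = ((l⁻¹ - 1) * l) • s' + (l⁻¹ - 1) • (s' * g) := by
            rw [smul_add, smul_smul]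
        _ = (1 - l) • s' + (l⁻¹ - 1) • (s' * g) := by
            congr 1
            rw [sub_mul, e1', one_mul]
    rw [key]
    module
  -- Part 2: 1 + X = (l+1) • s'
  have honeX : 1 + X = (l + 1) • s' := by
    calc 1 + X = s * s' + (1 - g) * s' := by rw [hss', hX]
      _ = (s + (1 - g)) * s' := (add_mul s (1 - g) s').symm
      _ = ((l + 1) • (1 : V →ₗ[E] V)) * s' := by
          rw [hs]
          congr 1
          module
      _ = (l + 1) • s' := by rw [smul_mul_assoc, one_mul]
  have part2 : IsUnit (1 + X) ↔ l ≠ -1 := by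
    constructor
    · intro hu hl
      rw [honeX, hl] at hu
      simp only [neg_add_cancel, zero_smul] at hu
      exact not_isUnit_zero hu
    · intro hl
      have hl1 : l + 1 ≠ 0 := fun h => hl (by linear_combination h)
      rw [honeX]
      refine ⟨⟨(l + 1) • s', (l + 1)⁻¹ • s, ?_, ?_⟩, rfl⟩
      · rw [smul_mul_assoc, mul_smul_comm, smul_smul, hs's, mul_inv_cancel₀ hl1, one_smul]
      · rw [smul_mul_assoc, mul_smul_comm, smul_smul, hss', inv_mul_cancel₀ hl1, one_smul]
  -- Part 3
  refine ⟨part1, part2, fun hl => ?_⟩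
  have hl1 : l + 1 ≠ 0 := fun h => hl (by linear_combination h)
  have hscal : ((1 + (l⁻¹ - 1))⁻¹ : E) = l := by
    rw [show (1 + (l⁻¹ - 1) : E) = l⁻¹ by ring, inv_inv]
  have hinv1X : Ring.inverse (1 + X) = (l + 1)⁻¹ • s := by
    rw [honeX]
    refine inv_eq _ _ ?_ ?_
    · rw [smul_mul_assoc, mul_smul_comm, smul_smul, hs's, mul_inv_cancel₀ hl1, one_smul]
    · rw [smul_mul_assoc, mul_smul_comm, smul_smul, hss', inv_mul_cancel₀ hl1, one_smul]
  have hnum : (1 : V →ₗ[E] V) - l • X = (1 + l) • (g * s') := by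
    calc (1 : V →ₗ[E] V) - l • X = s * s' - (l • (1 - g)) * s' := by
          rw [hss', hX, smul_mul_assoc]
      _ = (s - l • (1 - g)) * s' := (sub_mul s (l • (1 - g)) s').symm
      _ = ((1 + l) • g) * s' := by
          rw [hs]
          congr 1
          module
      _ = (1 + l) • (g * s') := by rw [smul_mul_assoc]
  rw [hscal, hinv1X, hnum]
  rw [smul_mul_assoc, mul_smul_comm, smul_smul, mul_assoc, hs's, mul_one]
  rw [show (1 + l) * (l + 1)⁻¹ = 1 by rw [add_comm]; exact mul_inv_cancel₀ hl1, one_smul]
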